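/- For ℓ ≥ 2, the formal power series identity Σ_{n≥1} (B(ℓ,n)/n) z^n = - Σ over (f1,...,f_{ℓ-1}) ∈ ℕ^{ℓ-1} of f1^{ℓ-2} f2^{ℓ-3} ··· f_{ℓ-2} · log(1 - z^{f1···f_{ℓ-1}}) holds for real z with |z| < 1 (both sides converging absolutely). -/

import Mathlib

set_option maxHeartbeats 1000000

open Finset

lemma aux_summable_pnat {r : ℝ} (hr : |r| < 1) (d : ℕ) :
    Summable (fun k : ℕ+ => ((k : ℕ) : ℝ) ^ d * r ^ (k : ℕ)) := by
  have h : Summable (fun n : ℕ => (n : ℝ) ^ d * r ^ n) :=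
    summable_pow_mul_geometric_of_norm_lt_one d (by rwa [Real.norm_eq_abs])
  exact h.comp_injective (fun a b hab => PNat.coe_injective hab)

lemma aux_pi {r : ℝ} (hr0 : 0 ≤ r) (hr1 : r < 1) :
    ∀ (n : ℕ) (e : Fin n → ℕ),
      Summable (fun f : Fin n → ℕ+ => ∏ i, (((f i : ℕ) : ℝ) ^ (e i) * r ^ (f i : ℕ))) := by
  intro n
  induction n with
  | zero => intro e; exact Summable.of_finite
  | succ n ih =>
    intro e
    have hr : |r| < 1 := abs_lt.mpr ⟨by linarith, hr1⟩
    have hsum : Summable (fun p : ℕ+ × (Fin n → ℕ+) =>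
        (((p.1 : ℕ) : ℝ) ^ (e 0) * r ^ (p.1 : ℕ)) *
          ∏ i : Fin n, (((p.2 i : ℕ) : ℝ) ^ (e i.succ) * r ^ (p.2 i : ℕ))) := by
      have h1 : (0:ℕ+ → ℝ) ≤ (fun k : ℕ+ => ((k : ℕ) : ℝ) ^ (e 0) * r ^ (k : ℕ)) :=
        fun k => mul_nonneg (pow_nonneg (Nat.cast_nonneg _) _) (pow_nonneg hr0 _)
      have h2 : (0:(Fin n → ℕ+) → ℝ) ≤ (fun f : Fin n → ℕ+ =>
          ∏ i, (((f i : ℕ) : ℝ) ^ (e i.succ) * r ^ (f i : ℕ))) :=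
        fun f => Finset.prod_nonneg fun i _ =>
          mul_nonneg (pow_nonneg (Nat.cast_nonneg _) _) (pow_nonneg hr0 _)
      have H := Summable.mul_of_nonneg (aux_summable_pnat hr (e 0)) (ih (fun i => e i.succ)) h1 h2
      exact H
    have hsum2 : Summable ((fun f : Fin (n+1) → ℕ+ =>
        ∏ i, (((f i : ℕ) : ℝ) ^ (e i) * r ^ (f i : ℕ))) ∘ (Fin.consEquiv fun _ => ℕ+)) :=
      hsum.congr (fun p => by
        simp [Function.comp, Fin.prod_univ_succ])
    exact ((Fin.consEquiv fun _ => ℕ+).summable_iff).mp hsum2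

lemma aux_sum_le : ∀ (n : ℕ) (f : Fin n → ℕ+), ∑ i, (f i : ℕ) ≤ (∏ i, (f i : ℕ)) + n := by
  intro n
  induction n with
  | zero => simp
  | succ n ih =>
    intro f
    rw [Fin.sum_univ_succ, Fin.prod_univ_succ]
    have h1 := ih (fun i => f i.succ)
    obtain ⟨a, ha⟩ : ∃ a, (f 0 : ℕ) = a + 1 := ⟨(f 0 : ℕ) - 1, by have := (f 0).pos; omega⟩
    obtain ⟨b, hb⟩ : ∃ b, (∏ i : Fin n, ((f i.succ : ℕ))) = b + 1 :=
      ⟨(∏ i : Fin n, ((f i.succ : ℕ))) - 1, by have : 0 < ∏ i : Fin n, ((f i.succ : ℕ)) := Finset.prod_pos fun i _ => (f i.succ).pos; omega⟩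
    rw [hb] at h1
    rw [ha, hb]
    have hexp : (a+1) * (b+1) = a*b + a + b + 1 := by ring
    omega

lemma aux_main_summable {r : ℝ} (hr0 : 0 < r) (hr1 : r < 1) (n : ℕ) (e : Fin n → ℕ) :
    Summable (fun f : Fin n → ℕ+ =>
      (∏ i, ((f i : ℕ) : ℝ) ^ (e i)) * r ^ (∏ i, (f i : ℕ))) := by
  have hpi := (aux_pi hr0.le hr1 n e).mul_left (r ^ n)⁻¹
  refine Summable.of_nonneg_of_le (fun f => by positivity) (fun f => ?_) hpi
  rw [Finset.prod_mul_distrib, Finset.prod_pow_eq_pow_sum]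
  have hS : (∑ i, (f i : ℕ)) ≤ (∏ i, (f i : ℕ)) + n := aux_sum_le n f
  have h2 : r ^ (∏ i, (f i : ℕ)) ≤ (r ^ n)⁻¹ * r ^ (∑ i, (f i : ℕ)) := by
    rw [inv_mul_eq_div, le_div_iff₀ (by positivity), ← pow_add]
    exact pow_le_pow_of_le_one hr0.le hr1.le hS
  calc (∏ i, ((f i : ℕ) : ℝ) ^ (e i)) * r ^ (∏ i, (f i : ℕ))
      ≤ (∏ i, ((f i : ℕ) : ℝ) ^ (e i)) * ((r ^ n)⁻¹ * r ^ (∑ i, (f i : ℕ))) := by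
        apply mul_le_mul_of_nonneg_left h2 (by positivity)
    _ = (r ^ n)⁻¹ * ((∏ i, ((f i : ℕ) : ℝ) ^ (e i)) * r ^ (∑ i, (f i : ℕ))) := by ring

/-- B(ℓ,n) as a sum over ℓ-tuples of positive integers with product n. -/
def Btuple (ℓ n : ℕ) : ℕ :=
  ∑ f ∈ (Fintype.piFinset fun _ : Fin ℓ => Finset.range (n+1)) |>.filter
      (fun f => ∏ i, f i = n),
    ∏ i : Fin ℓ, (f i) ^ (ℓ - 1 - (i : ℕ))

theorem stmt_18 (ℓ : ℕ) (hℓ : 2 ≤ ℓ) (z : ℝ) (hz : |z| < 1) :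
    ∑' n : ℕ+, (Btuple ℓ n : ℝ) / (n : ℝ) * z ^ (n : ℕ) =
      - ∑' f : Fin (ℓ - 1) → ℕ+,
          (∏ i : Fin (ℓ - 1), ((f i : ℕ) : ℝ) ^ (ℓ - 2 - (i : ℕ))) *
            Real.log (1 - z ^ (∏ i : Fin (ℓ - 1), (f i : ℕ))) := by
  obtain ⟨m, rfl⟩ : ∃ m, ℓ = m + 1 := ⟨ℓ - 1, by omega⟩
  have hm : 1 ≤ m := by omega
  show ∑' n : ℕ+, (Btuple (m+1) n : ℝ) / (n : ℝ) * z ^ (n : ℕ) =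
      - ∑' f : Fin m → ℕ+,
          (∏ i : Fin m, ((f i : ℕ) : ℝ) ^ (m - 1 - (i : ℕ))) *
            Real.log (1 - z ^ (∏ i : Fin m, (f i : ℕ)))
  rcases eq_or_ne z 0 with rfl | hz0
  · have h1 : ∀ n : ℕ+, (Btuple (m+1) n : ℝ) / (n : ℝ) * (0:ℝ) ^ (n : ℕ) = 0 := by
      intro n; rw [zero_pow n.pos.ne', mul_zero]
    have h2 : ∀ f : Fin m → ℕ+, (∏ i : Fin m, ((f i : ℕ) : ℝ) ^ (m - 1 - (i : ℕ))) *
        Real.log (1 - (0:ℝ) ^ (∏ i : Fin m, (f i : ℕ))) = 0 := by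
      intro f
      rw [zero_pow (Finset.prod_pos fun i _ => (f i).pos).ne', sub_zero, Real.log_one, mul_zero]
    rw [tsum_congr h1, tsum_congr h2, tsum_zero, tsum_zero, neg_zero]
  have hr0 : 0 < |z| := abs_pos.mpr hz0
  set T : (Fin (m+1) → ℕ+) → ℝ := fun f =>
    (∏ i, ((f i : ℕ) : ℝ) ^ (m - (i : ℕ))) / ((∏ i, (f i : ℕ) : ℕ) : ℝ)
      * z ^ (∏ i, (f i : ℕ)) with hT
  have hTsum : Summable T := by
    have hb := (aux_main_summable hr0 hz (m+1) (fun i => m - (i : ℕ)))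
    refine (Summable.of_nonneg_of_le (fun f => abs_nonneg _) (fun f => ?_) hb).of_abs
    have hP : 0 < ∏ i, (f i : ℕ) := Finset.prod_pos fun i _ => (f i).pos
    have hQ : (0:ℝ) ≤ ∏ i, ((f i : ℕ) : ℝ) ^ (m - (i : ℕ)) :=
      Finset.prod_nonneg fun i _ => by positivity
    rw [hT, abs_mul, abs_div, abs_pow, abs_of_nonneg hQ,
      abs_of_nonneg (by positivity : (0:ℝ) ≤ ((∏ i, (f i : ℕ) : ℕ) : ℝ))]
    apply mul_le_mul_of_nonneg_right _ (pow_nonneg (abs_nonneg z) _)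
    exact div_le_self hQ (Nat.one_le_cast.mpr hP)
  set A := ∑' f, T f with hA
  have hAsum : HasSum T A := hTsum.hasSum
  set N : (Fin (m+1) → ℕ+) → ℕ+ := fun f =>
    ⟨∏ i, (f i : ℕ), Finset.prod_pos fun i _ => (f i).pos⟩ with hN
  have hfib := hAsum.tsum_fiberwise N
  have hfiber : ∀ n : ℕ+, (∑' f : N ⁻¹' {n}, T f) =
      (Btuple (m+1) n : ℝ) / (n : ℝ) * z ^ (n : ℕ) := by
    intro n
    have hprod : ∀ f : ↥(N ⁻¹' {n}), ∏ i, (f.1 i : ℕ) = (n : ℕ) := by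
      intro f
      have hNf : N f.1 = n := f.2
      exact congrArg (fun k : ℕ+ => (k : ℕ)) hNf
    have hle : ∀ (f : ↥(N ⁻¹' {n})) (i : Fin (m+1)), (f.1 i : ℕ) ≤ (n : ℕ) := by
      intro f i
      calc (f.1 i : ℕ) ≤ ∏ j, (f.1 j : ℕ) :=
            Finset.single_le_prod' (f := fun j => (f.1 j : ℕ)) (fun j _ => (f.1 j).pos) (Finset.mem_univ i)
        _ = (n : ℕ) := hprod f
    haveI : Finite ↥(N ⁻¹' {n}) := by
      refine Finite.of_injective (fun f => (fun i =>
        (⟨(f.1 i : ℕ), Nat.lt_succ_of_le (hle f i)⟩ : Fin ((n:ℕ)+1)))) ?_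
      intro f g hfg
      apply Subtype.ext; funext i
      exact PNat.coe_injective (by simpa using congrFun hfg i)
    haveI := Fintype.ofFinite ↥(N ⁻¹' {n})
    rw [tsum_eq_sum (s := Finset.univ) (fun b hb => absurd (Finset.mem_univ b) hb)]
    have hkey : ∑ f : ↥(N ⁻¹' {n}), (∏ i, ((f.1 i : ℕ) : ℝ) ^ (m - (i : ℕ)))
        = (Btuple (m+1) (n:ℕ) : ℝ) := by
      rw [show (Btuple (m+1) (n:ℕ)) = ∑ f : ↥(N ⁻¹' {n}), (∏ i, (f.1 i : ℕ) ^ (m - (i : ℕ)))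
        from ?_]
      · push_cast
        rfl
      · unfold Btuple
        refine (Finset.sum_bij'
          (i := fun (f : ↥(N ⁻¹' {n})) (_ : f ∈ Finset.univ) => fun i => (f.1 i : ℕ))
          (j := fun g hg => ⟨fun i => ⟨g i, by
            have h2 := (Finset.mem_filter.mp hg).2
            have hgpos : 0 < ∏ j, g j := h2 ▸ n.pos
            exact Nat.pos_of_ne_zero fun h =>
              (Finset.prod_eq_zero (Finset.mem_univ i) h ▸ hgpos).false⟩, by
            have h2 := (Finset.mem_filter.mp hg).2
            show N _ ∈ ({n} : Set ℕ+)
            exact Set.mem_singleton_iff.mpr (PNat.coe_injective h2)⟩)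
          (hi := fun f _ => Finset.mem_filter.mpr ⟨Fintype.mem_piFinset.mpr fun i =>
            Finset.mem_range.mpr (Nat.lt_succ_of_le (hle f i)), by simpa using hprod f⟩)
          (hj := fun g hg => Finset.mem_univ _)
          (left_neg := fun f _ => by apply Subtype.ext; funext i; rfl)
          (right_neg := fun g hg => by funext i; rfl)
          (h := fun f _ => by rfl)).symm
    have hterm : ∀ f : ↥(N ⁻¹' {n}), T f.1 =
        (∏ i, ((f.1 i : ℕ) : ℝ) ^ (m - (i : ℕ))) / ((n:ℕ) : ℝ) * z ^ ((n : ℕ)) := by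
      intro f
      simp only [hT]
      rw [hprod f]
    calc ∑ f : ↥(N ⁻¹' {n}), T f.1
        = ∑ f : ↥(N ⁻¹' {n}), (∏ i, ((f.1 i : ℕ) : ℝ) ^ (m - (i : ℕ))) / ((n:ℕ):ℝ) * z ^ (n:ℕ) :=
          Finset.sum_congr rfl fun f _ => hterm f
      _ = (∑ f : ↥(N ⁻¹' {n}), ∏ i, ((f.1 i : ℕ) : ℝ) ^ (m - (i : ℕ))) / ((n:ℕ):ℝ) * z ^ (n:ℕ) := by
          rw [← Finset.sum_mul, ← Finset.sum_div]
      _ = (Btuple (m+1) (n:ℕ) : ℝ) / ((n:ℕ):ℝ) * z ^ (n:ℕ) := by rw [hkey]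
  have hLHS : ∑' n : ℕ+, (Btuple (m+1) n : ℝ) / (n : ℝ) * z ^ (n : ℕ) = A :=
    (tsum_congr fun n => (hfiber n).symm).trans hfib.tsum_eq
  have hRHS : HasSum (fun g : Fin m → ℕ+ =>
      (∏ i : Fin m, ((g i : ℕ) : ℝ) ^ (m - 1 - (i : ℕ))) *
        -Real.log (1 - z ^ (∏ i : Fin m, (g i : ℕ)))) A := by
    have hE : HasSum (T ∘ ((Equiv.prodComm (Fin m → ℕ+) ℕ+).trans
        (Fin.snocEquiv fun _ => ℕ+))) A := (Equiv.hasSum_iff _).mpr hAsum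
    refine hE.prod_fiberwise fun g => ?_
    have hPg : 0 < ∏ i : Fin m, (g i : ℕ) := Finset.prod_pos fun i _ => (g i).pos
    have hw : |z ^ (∏ i : Fin m, (g i : ℕ))| < 1 := by
      rw [abs_pow]
      calc |z| ^ (∏ i : Fin m, (g i : ℕ)) ≤ |z| ^ 1 :=
            pow_le_pow_of_le_one (abs_nonneg z) hz.le hPg
        _ < 1 := by rwa [pow_one]
    have hlog : HasSum (fun k : ℕ+ => (z ^ (∏ i : Fin m, (g i : ℕ))) ^ (k:ℕ) / ((k:ℕ):ℝ))
        (-Real.log (1 - z ^ (∏ i : Fin m, (g i : ℕ)))) := by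
      have h2 := (Equiv.pnatEquivNat.hasSum_iff).mpr (Real.hasSum_pow_div_log_of_abs_lt_one hw)
      have heq : (fun k : ℕ+ => (z ^ (∏ i : Fin m, (g i : ℕ))) ^ (k:ℕ) / ((k:ℕ):ℝ))
          = ((fun j : ℕ => (z ^ (∏ i : Fin m, (g i : ℕ))) ^ (j+1) / ((j:ℝ)+1))
              ∘ Equiv.pnatEquivNat) := by
        funext k
        have hk : (Equiv.pnatEquivNat k) + 1 = (k : ℕ) := PNat.natPred_add_one k
        simp only [Function.comp_apply, ← hk]
        push_cast
        ring_nf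
      rw [heq]
      exact h2
    have hinner := hlog.mul_left (∏ i : Fin m, ((g i : ℕ) : ℝ) ^ (m - 1 - (i : ℕ)))
    have heq2 : ∀ k : ℕ+, (T ∘ ((Equiv.prodComm (Fin m → ℕ+) ℕ+).trans
        (Fin.snocEquiv fun _ => ℕ+))) (g, k)
        = (∏ i : Fin m, ((g i : ℕ) : ℝ) ^ (m - 1 - (i : ℕ))) *
            ((z ^ (∏ i : Fin m, (g i : ℕ))) ^ (k:ℕ) / ((k:ℕ):ℝ)) := by
      intro k
      have hp1 : (∏ i : Fin (m+1), ((Fin.snoc g k : Fin (m+1) → ℕ+) i : ℕ))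
          = (∏ i : Fin m, (g i : ℕ)) * (k:ℕ) := by
        rw [Fin.prod_univ_castSucc]
        simp
      have hp2 : (∏ i : Fin (m+1), (((Fin.snoc g k : Fin (m+1) → ℕ+) i : ℕ):ℝ) ^ (m - (i:ℕ)))
          = ∏ i : Fin m, ((g i : ℕ):ℝ) ^ (m - (i:ℕ)) := by
        rw [Fin.prod_univ_castSucc]
        simp
      have hp3 : ∏ i : Fin m, ((g i : ℕ):ℝ) ^ (m - (i:ℕ))
          = (∏ i : Fin m, ((g i : ℕ):ℝ) ^ (m - 1 - (i:ℕ))) * (∏ i : Fin m, ((g i:ℕ):ℝ)) := by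
        rw [← Finset.prod_mul_distrib]
        refine Finset.prod_congr rfl fun i _ => ?_
        rw [← pow_succ]
        congr 1
        have := i.2
        omega
      show T (Fin.snocEquiv (fun _ => ℕ+) (k, g)) = _
      have hsnoc : (Fin.snocEquiv (fun _ => ℕ+) (k, g)) = (Fin.snoc g k : Fin (m+1) → ℕ+) := rfl
      rw [hsnoc]
      simp only [hT]
      rw [hp1, hp2, hp3, ← pow_mul]
      have hPgR : (∏ i : Fin m, ((g i:ℕ):ℝ)) ≠ 0 := by positivity
      have hkR : ((k:ℕ) : ℝ) ≠ 0 := Nat.cast_ne_zero.mpr k.pos.ne'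
      push_cast
      field_simp
    exact (funext heq2 : _ = _) ▸ hinner
  rw [hLHS, ← hRHS.tsum_eq, ← tsum_neg]
  exact tsum_congr fun g => by ring
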